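/- arXiv:2205.07158 — 2 statements merged into one kernel-verified Lean document; each statement's English description precedes it below -/
import Mathlib

section
/- Let G be a finite group of order n acting on a connected smooth projective curve X over k with quotient map π: X → X/G = Y, let χ: G → k* be a 1-dimensional character and f_χ ∈ K(X)* with σ f_χ = χ(σ) f_χ for all σ ∈ G. Then for every branch point Q ∈ Bl(Y): n·⟨v_Q(f_χ^n)/n⟩ = ⟨χ, R_{G,Q}⟩_G, where ⟨r⟩ = r − ⌊r⌋ is the fractional part. In particular this quantity is independent of the choice of f_χ. -/
/-!
STATEMENT 4 (Lemma 2.3 in the paper).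
Let `G` be a finite group of order `n` acting on a connected smooth projective
curve `X` over `k`, `π : X → Y = X/G`, `χ : G → k*` a 1-dimensional character
and `f_χ ∈ K(X)*` with `σ f_χ = χ(σ) f_χ` for all `σ`.  Then for every branch
point `Q ∈ Bl(Y)`:
  `n·⟨v_Q(f_χⁿ)/n⟩ = ⟨χ, R_{G,Q}⟩_G`,
where `⟨r⟩` is the fractional part; in particular the quantity is independent
of the choice of `f_χ`.

Modelling: for each `P`, `θ P : G → k*` is the character of the stabilizer
`G_P` (cyclic of order `e_P`) determined by `σf/f ≡ θ_P(σ)^{v_P(f)} mod m_P`;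
we encode its defining property by: whenever `σ ∈ G_P` and `σ • f = c • f`
with `c ∈ k*`, then `c = θ_P(σ)^{v_P(f)}`.  Since `χ|_{G_P} = θ_P^{a_P}` for a
unique `0 ≤ a_P < e_P` and, by Frobenius reciprocity,
`⟨χ, R_{G,P}⟩_G = a_P`, the multiplicity `⟨χ, R_{G,Q}⟩_G` of `χ` in the
ramification module `R_{G,Q} = ⊕_{P ∈ π⁻¹(Q)} Ind_{G_P}^G(⊕_d d·θ_P^d)` equals
`∑_{P ∈ π⁻¹(Q)} a_P`.  Finally `f_χⁿ = π* g` for a rational function `g` on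
`Y`, and `v_Q(f_χⁿ) := v_Q(g)`.
-/


/-- If a group `H` embeds in the units of a field `k` via `ψ` and `ψ σ ^ d = 1`
for all `σ`, then `Nat.card H` divides `d`. -/
lemma cw_aux_card_dvd {k : Type*} [Field k] {H : Type*} [Group H] [Finite H]
    (ψ : H →* kˣ) (hinj : Function.Injective ψ) (d : ℤ)
    (hd : ∀ σ : H, ψ σ ^ d = 1) : (Nat.card H : ℤ) ∣ d := by
  have hinj' : Function.Injective ((Units.coeHom k).comp ψ) :=
    fun x y hxy => hinj (Units.ext hxy)
  haveI : IsCyclic H := isCyclic_of_subgroup_isDomain ((Units.coeHom k).comp ψ) hinj'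
  obtain ⟨σ0, hσ0⟩ := IsCyclic.exists_ofOrder_eq_natCard (α := H)
  have hord : orderOf (ψ σ0) = Nat.card H := by
    rw [orderOf_injective ψ hinj σ0, hσ0]
  have := orderOf_dvd_iff_zpow_eq_one.mpr (hd σ0)
  rwa [hord] at this

theorem chevalley_weil_stmt_4
    (k : Type*) [Field k] [IsAlgClosed k]
    (G : Type*) [Group G] [Fintype G]
    (n : ℕ) (hn : n = Fintype.card G)
    -- char k = 0 or char k ∤ n
    (hchar : ∀ p : ℕ, p.Prime → (p : k) = 0 → ¬ p ∣ n)
    -- the points of X and of Y = X/G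
    (X Y : Type*) [MulAction G X]
    (π : X → Y) (hπsurj : Function.Surjective π)
    (hπG : ∀ (σ : G) (P : X), π (σ • P) = π P)
    (horb : ∀ P P' : X, π P = π P' ↔ ∃ σ : G, σ • P = P')
    -- ramification indices: order of the stabilizer
    (e : X → ℕ)
    (he : ∀ P : X, e P = Nat.card (MulAction.stabilizer G P))
    -- the function fields K(X), K(Y), with G acting on K(X) by k-algebra maps
    (FX FY : Type*) [Field FX] [Field FY] [Algebra k FX] [Algebra k FY]
    [MulSemiringAction G FX] [SMulCommClass G k FX]
    -- valuations at the points
    (vX : X → FX → ℤ) (vY : Y → FY → ℤ)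
    (hvXmul : ∀ (P : X) (f g : FX), f ≠ 0 → g ≠ 0 → vX P (f * g) = vX P f + vX P g)
    (hvXfin : ∀ f : FX, f ≠ 0 → {P : X | vX P f ≠ 0}.Finite)
    (hvXG : ∀ (σ : G) (P : X) (f : FX), vX (σ • P) (σ • f) = vX P f)
    -- the pullback π* : K(Y) → K(X)
    (pb : FY →ₐ[k] FX)
    (hpbG : ∀ (σ : G) (g : FY), σ • (pb g) = pb g)
    (hpbv : ∀ (g : FY) (P : X), g ≠ 0 → vX P (pb g) = (e P : ℤ) * vY (π P) g)
    -- the local characters θ_P of the stabilizers G_P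
    (θ : X → (G →* kˣ))
    (hθ : ∀ (P : X) (σ : G), σ ∈ MulAction.stabilizer G P →
      ∀ (f : FX) (c : kˣ), f ≠ 0 → σ • f = ((c : kˣ) : k) • f →
        c = (θ P σ) ^ (vX P f))
    (hθord : ∀ (P : X) (σ : G), σ ∈ MulAction.stabilizer G P → (θ P σ) ^ (e P) = 1)
    (hθfaith : ∀ (P : X) (σ : G), σ ∈ MulAction.stabilizer G P → θ P σ = 1 → σ = 1)
    -- a 1-dimensional character χ : G → k* and f_χ ∈ K(X)* with σ f_χ = χ(σ) f_χ
    (χ : G →* kˣ)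
    (fχ : FX) (hfχ : fχ ≠ 0)
    (hfχeq : ∀ σ : G, σ • fχ = ((χ σ : kˣ) : k) • fχ)
    -- a P = ⟨χ, R_{G,P}⟩_G is the unique 0 ≤ a_P < e_P with χ|_{G_P} = θ_P^{a_P}
    (a : X → ℕ) (ha : ∀ P : X, a P < e P)
    (haχ : ∀ (P : X) (σ : G), σ ∈ MulAction.stabilizer G P → χ σ = (θ P σ) ^ (a P))
    -- f_χⁿ is G-invariant, hence comes from a rational function g on Y
    (g : FY) (hg : pb g = fχ ^ n) :
    -- for every branch point Q: n⟨v_Q(f_χⁿ)/n⟩ = ⟨χ, R_{G,Q}⟩_G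
    ∀ Q : Y, (∃ P : X, π P = Q ∧ 1 < e P) →
      (n : ℚ) * Int.fract ((vY Q g : ℚ) / (n : ℚ)) = ∑ᶠ P ∈ π ⁻¹' {Q}, (a P : ℚ) := by
    classical
  intro Q hQ
  obtain ⟨P0, hP0Q, -⟩ := hQ
  have hn0 : 0 < n := hn ▸ Fintype.card_pos
  -- vX P 1 = 0
  have hv1 : ∀ P : X, vX P (1 : FX) = 0 := by
    intro P
    have h := hvXmul P 1 1 one_ne_zero one_ne_zero
    rw [one_mul] at h
    omega
  -- valuation of powers
  have hvpow : ∀ (P : X) (f : FX), f ≠ 0 → ∀ m : ℕ, vX P (f ^ m) = (m : ℤ) * vX P f := by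
    intro P f hf m
    induction m with
    | zero => simpa using hv1 P
    | succ m ih =>
      rw [pow_succ, hvXmul P _ f (pow_ne_zero _ hf) hf, ih]
      push_cast; ring
  -- g ≠ 0
  have hgpb : pb g ≠ 0 := by rw [hg]; exact pow_ne_zero _ hfχ
  have hg0 : g ≠ 0 := by rintro rfl; exact hgpb (map_zero pb)
  -- scalars are G-invariant and nonzero
  have hsc : ∀ (σ : G) (c : k), σ • (algebraMap k FX c) = algebraMap k FX c := by
    intro σ c
    rw [Algebra.algebraMap_eq_smul_one, smul_comm σ c (1 : FX), smul_one]
  have hscne : ∀ c : kˣ, algebraMap k FX (c : k) ≠ 0 := by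
    intro c
    have := (algebraMap k FX).injective.ne c.ne_zero
    simpa using this
  -- key divisibility
  have hdvd : ∀ (P : X) (d : ℤ),
      (∀ σ : MulAction.stabilizer G P, θ P (σ : G) ^ d = 1) → (e P : ℤ) ∣ d := by
    intro P d hd
    rw [he P]
    have hinj : Function.Injective ((θ P).comp (MulAction.stabilizer G P).subtype) := by
      refine (injective_iff_map_eq_one _).mpr ?_
      intro x hx
      exact Subtype.ext (hθfaith P x x.2 hx)
    exact_mod_cast cw_aux_card_dvd ((θ P).comp (MulAction.stabilizer G P).subtype) hinj d hd
  -- e P divides the valuation of a scalar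
  have hscv : ∀ (P : X) (c : kˣ), (e P : ℤ) ∣ vX P (algebraMap k FX (c : k)) := by
    intro P c
    apply hdvd
    intro σ
    have h1 := hθ P σ σ.2 (algebraMap k FX (c : k)) 1 (hscne c)
      (by rw [hsc, Units.val_one, one_smul])
    exact h1.symm
  -- χ = θ^{v_P(fχ)} on the stabilizer
  have hχv : ∀ (P : X) (σ : G), σ ∈ MulAction.stabilizer G P →
      χ σ = θ P σ ^ (vX P fχ) := fun P σ hσ => hθ P σ hσ fχ (χ σ) hfχ (hfχeq σ)
  -- e P divides v_P(fχ) - a P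
  have hva : ∀ P : X, (e P : ℤ) ∣ (vX P fχ - (a P : ℤ)) := by
    intro P
    apply hdvd
    intro σ
    have h1 := hχv P σ σ.2
    have h2 := haχ P σ σ.2
    rw [zpow_sub, ← h1, zpow_natCast, ← h2]
    group
  -- e is constant on orbits
  have hecon : ∀ (σ : G) (P : X), e (σ • P) = e P := by
    intro σ P
    rw [he, he, MulAction.stabilizer_smul_eq_stabilizer_map_conj]
    exact (Nat.card_congr (Subgroup.equivMapOfInjective _ _
      (MulAut.conj σ).injective).toEquiv).symm
  -- the valuation of fχ is constant modulo e P0 on the orbit of P0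
  have hvmod : ∀ σ : G, (e P0 : ℤ) ∣ (vX (σ • P0) fχ - vX P0 fχ) := by
    intro σ
    have h1 := hvXG σ P0 fχ
    rw [hfχeq σ, Algebra.smul_def, hvXmul _ _ _ (hscne (χ σ)) hfχ] at h1
    have h2 := hscv (σ • P0) (χ σ)
    rw [hecon σ P0] at h2
    have h3 : vX (σ • P0) fχ - vX P0 fχ
        = -(vX (σ • P0) (algebraMap k FX ((χ σ : kˣ) : k))) := by linarith
    rw [h3]
    exact dvd_neg.mpr h2
  -- a is constant on the orbit of P0
  have hacon : ∀ σ : G, a (σ • P0) = a P0 := by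
    intro σ
    have d1 := hva (σ • P0)
    rw [hecon σ P0] at d1
    have d2 := hva P0
    have d3 := hvmod σ
    have h4 : (e P0 : ℤ) ∣ ((a P0 : ℤ) - (a (σ • P0) : ℤ)) := by
      have h5 := (d1.sub d3).sub d2
      have h6 : (vX (σ • P0) fχ - (a (σ • P0) : ℤ)) - (vX (σ • P0) fχ - vX P0 fχ)
          - (vX P0 fχ - (a P0 : ℤ)) = (a P0 : ℤ) - (a (σ • P0) : ℤ) := by ring
      rwa [h6] at h5
    have hb1 := ha (σ • P0)
    rw [hecon σ P0] at hb1
    have hb2 := ha P0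
    have h7 : ((a P0 : ℤ) - (a (σ • P0) : ℤ)) = 0 := by
      refine Int.eq_zero_of_abs_lt_dvd h4 ?_
      rw [abs_lt]
      constructor <;> [skip; skip] <;> push_cast <;> omega
    omega
  -- the fiber of Q equals the orbit of P0
  have hfib : π ⁻¹' {Q} = MulAction.orbit G P0 := by
    ext P
    simp only [Set.mem_preimage, Set.mem_singleton_iff, MulAction.mem_orbit_iff]
    constructor
    · intro h
      obtain ⟨σ, hσ⟩ := (horb P P0).mp (h.trans hP0Q.symm)
      exact ⟨σ⁻¹, by rw [← hσ, inv_smul_smul]⟩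
    · rintro ⟨σ, rfl⟩
      rw [hπG]
      exact hP0Q
  have hofin : (MulAction.orbit G P0).Finite := Set.finite_range _
  haveI : Fintype (MulAction.orbit G P0) := hofin.fintype
  haveI : Fintype (MulAction.stabilizer G P0) := Fintype.ofFinite _
  set s := Fintype.card (MulAction.orbit G P0) with hs
  have hs0 : 0 < s := Fintype.card_pos_iff.mpr ⟨⟨P0, MulAction.mem_orbit_self P0⟩⟩
  have he0 : e P0 = Fintype.card (MulAction.stabilizer G P0) := by
    rw [he, Nat.card_eq_fintype_card]
  have hcard : s * e P0 = n := by
    rw [he0, hn]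
    exact MulAction.card_orbit_mul_card_stabilizer_eq_card_group G P0
  have he0pos : 0 < e P0 := by
    rcases Nat.eq_zero_or_pos (e P0) with h | h
    · rw [h, mul_zero] at hcard; omega
    · exact h
  -- m = vY Q g
  have hm1 : (e P0 : ℤ) * vY Q g = (n : ℤ) * vX P0 fχ := by
    have h := hpbv g P0 hg0
    rw [hP0Q, hg, hvpow P0 fχ hfχ n] at h
    linarith
  obtain ⟨t, ht⟩ := hva P0
  have hmeq : vY Q g = (s : ℤ) * (a P0 : ℤ) + (n : ℤ) * t := by
    have h8 : (e P0 : ℤ) * vY Q g = (e P0 : ℤ) * ((s : ℤ) * (a P0 : ℤ) + (n : ℤ) * t) := by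
      rw [hm1]
      have h9 : vX P0 fχ = (a P0 : ℤ) + (e P0 : ℤ) * t := by linarith
      rw [h9]
      have h10 : ((s : ℤ)) * (e P0 : ℤ) = (n : ℤ) := by exact_mod_cast congrArg Nat.cast hcard
      nlinarith [h10]
    have : (e P0 : ℤ) ≠ 0 := by exact_mod_cast he0pos.ne'
    exact mul_left_cancel₀ this h8
  have hmod : vY Q g % (n : ℤ) = (s : ℤ) * (a P0 : ℤ) := by
    rw [hmeq, Int.add_mul_emod_self_left]
    refine Int.emod_eq_of_lt (by positivity) ?_
    have : s * a P0 < n := by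
      calc s * a P0 < s * e P0 := (mul_lt_mul_iff_right₀ hs0).mpr (ha P0)
      _ = n := hcard
    exact_mod_cast this
  -- compute both sides
  rw [Int.fract_div_intCast_eq_div_intCast_mod, hmod, hfib,
    finsum_mem_eq_finite_toFinset_sum _ hofin]
  have hsum : ∑ P ∈ hofin.toFinset, (a P : ℚ) = ∑ P ∈ hofin.toFinset, (a P0 : ℚ) := by
    refine Finset.sum_congr rfl ?_
    intro P hP
    rw [Set.Finite.mem_toFinset] at hP
    obtain ⟨σ, rfl⟩ := hP
    rw [hacon σ]
  rw [hsum, Finset.sum_const, hofin.card_toFinset, ← hs, nsmul_eq_mul]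
  have hnne : (n : ℚ) ≠ 0 := by exact_mod_cast hn0.ne'
  field_simp
  push_cast
  rfl
end

section
/- Let X = X_1 ∪ ... ∪ X_d be a connected nodal curve with irreducible components X_i, G a finite group acting faithfully on X such that Y = X/G is irreducible (so G acts transitively on the components), G_1 the stabilizer of X_1, I_i the set of intersection points of X_i with the other components, and χ: G → k* a 1-dimensional character with restriction χ_1 = χ|_{G_1}. Then the map φ ↦ φ|_{X_1} gives an isomorphism from H^0(X, ω_X)_χ ⊆ [⊕_{i=1}^d H^0(X_i, ω_{X_i}(I_i))]_χ onto its image, and the projection p_1: [⊕_{i=1}^d H^0(X_i, ω_{X_i}(I_i))]_χ → H^0(X_1, ω_{X_1}(I_1))_{χ_1} is an isomorphism. -/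
/-!
STATEMENT 14 (Proposition 4.1 in the paper).
Let `X = X₁ ∪ … ∪ X_d` be a connected nodal curve with irreducible components
`X_i`, `G` a finite group acting faithfully on `X` such that `Y = X/G` is
irreducible (so `G` acts transitively on the components), `G₁` the stabilizer
of `X₁`, `I_i` the set of intersection points of `X_i`, and `χ : G → k*` a
1-dimensional character with restriction `χ₁ = χ|_{G₁}`.  Then the map
`φ ↦ φ|_{X₁}` gives an isomorphism from
`H⁰(X, ω_X)_χ ⊆ [⊕ᵢ H⁰(X_i, ω_{X_i}(I_i))]_χ` onto its image, and the
projection `p₁ : [⊕ᵢ H⁰(X_i, ω_{X_i}(I_i))]_χ → H⁰(X₁, ω_{X₁}(I₁))_{χ₁}`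
is an isomorphism.

Modelling: the components are indexed by a finite type `ι` of cardinality `d`
with a transitive `G`-action; `i₀ ∈ ι` is the index of the component `X₁`, so
`G₁` is the stabilizer of `i₀`; `V = ⊕ᵢ H⁰(X_i, ω_{X_i}(I_i))`, equipped with
the component projections `p i` (a complete system of orthogonal idempotents,
with `p (i₀)` the restriction `φ ↦ φ|_{X₁}` whose range is
`H⁰(X₁, ω_{X₁}(I₁))`), and `G` acts `k`-linearly on `V` permuting the
components; `H⁰(X, ω_X)` is a `G`-stable subspace `W ⊆ V`.  The isomorphisms
of the conclusion are expressed as injectivity/bijectivity of the `k`-linear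
map `p i₀` on the relevant isotypic sets.
-/

theorem chevalley_weil_stmt_14
    (k : Type*) [Field k] [IsAlgClosed k]
    (G : Type*) [Group G] [Fintype G]
    (hchar : ∀ p : ℕ, p.Prime → (p : k) = 0 → ¬ p ∣ Fintype.card G)
    -- the d irreducible components, permuted transitively by G
    (ι : Type*) [Fintype ι] [MulAction G ι]
    (htrans : MulAction.IsPretransitive G ι)
    (d : ℕ) (hd : Fintype.card ι = d)
    (i₀ : ι)
    -- V = ⊕_i H⁰(X_i, ω_{X_i}(I_i)) with component projections p i and a
    -- compatible G-action permuting the components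
    (V : Type*) [AddCommGroup V] [Module k V]
    [DistribMulAction G V] [SMulCommClass G k V]
    (p : ι → (V →ₗ[k] V))
    (hpsum : ∀ w : V, ∑ i : ι, p i w = w)
    (hportho : ∀ i j : ι, i ≠ j → ∀ w : V, p i (p j w) = 0)
    (hpidem : ∀ (i : ι) (w : V), p i (p i w) = p i w)
    (hpG : ∀ (σ : G) (i : ι) (w : V), σ • (p i w) = p (σ • i) (σ • w))
    -- H⁰(X, ω_X) is a G-stable subspace W of V
    (W : Submodule k V)
    (hWG : ∀ (σ : G), ∀ w ∈ W, σ • w ∈ W)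
    -- a 1-dimensional character χ of G
    (χ : G →* kˣ) :
    -- φ ↦ φ|_{X₁} is injective (an isomorphism onto its image) on H⁰(X, ω_X)_χ
    Set.InjOn (p i₀)
      {w : V | w ∈ W ∧ ∀ σ : G, σ • w = ((χ σ : kˣ) : k) • w}
    ∧
    -- p₁ : [⊕_i H⁰(X_i, ω_{X_i}(I_i))]_χ → H⁰(X₁, ω_{X₁}(I₁))_{χ₁} is an
    -- isomorphism
    Set.BijOn (p i₀)
      {w : V | ∀ σ : G, σ • w = ((χ σ : kˣ) : k) • w}
      {w : V | p i₀ w = w ∧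
        ∀ σ ∈ MulAction.stabilizer G i₀, σ • w = ((χ σ : kˣ) : k) • w} := by
  classical
  set S : Set V := {w : V | ∀ σ : G, σ • w = ((χ σ : kˣ) : k) • w} with hS
  have key : ∀ w ∈ S, p i₀ w = 0 → w = 0 := by
    intro w hw h0
    have hcomp : ∀ i : ι, p i w = 0 := by
      intro i
      obtain ⟨σ, hσ⟩ := htrans.exists_smul_eq i₀ i
      have h1 := hpG σ i₀ w
      rw [h0, smul_zero, hσ, hw σ, map_smul] at h1
      rcases smul_eq_zero.mp h1.symm with hc | hv
      · exact absurd hc (Units.ne_zero (χ σ))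
      · exact hv
    calc w = ∑ i : ι, p i w := (hpsum w).symm
      _ = 0 := by simp [hcomp]
  have hinjS : Set.InjOn (p i₀) S := by
    intro x hx y hy hxy
    have hxyS : (x - y) ∈ S := by
      intro σ
      simp only [smul_sub, hx σ, hy σ]
    have := key (x - y) hxyS (by rw [map_sub, hxy, sub_self])
    exact sub_eq_zero.mp this
  have hmaps : Set.MapsTo (p i₀) S
      {w : V | p i₀ w = w ∧
        ∀ σ ∈ MulAction.stabilizer G i₀, σ • w = ((χ σ : kˣ) : k) • w} := by
    intro w hw
    refine ⟨hpidem i₀ w, fun σ hσ => ?_⟩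
    have hσ' : σ • i₀ = i₀ := hσ
    rw [hpG σ i₀ w, hw σ, hσ', map_smul]
  have hsurj : Set.SurjOn (p i₀) S
      {w : V | p i₀ w = w ∧
        ∀ σ ∈ MulAction.stabilizer G i₀, σ • w = ((χ σ : kˣ) : k) • w} := by
    rintro v ⟨hv1, hv2⟩
    set n : ℕ := (Finset.univ.filter (fun σ : G => σ • i₀ = i₀)).card with hn_def
    have hn_eq : n = Fintype.card (MulAction.stabilizer G i₀) := by
      rw [hn_def]
      simp [Fintype.card_subtype, MulAction.mem_stabilizer_iff]
    have hdvd : n ∣ Fintype.card G := by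
      rw [hn_eq, ← Nat.card_eq_fintype_card, ← Nat.card_eq_fintype_card]
      exact Subgroup.card_subgroup_dvd_card _
    have hn_pos : 0 < n := by
      rw [hn_def, Finset.card_pos]
      exact ⟨1, by simp⟩
    have hnk : (n : k) ≠ 0 := by
      intro h
      have hdvd' : ringChar k ∣ n := (ringChar.spec k n).mp h
      rcases CharP.char_is_prime_or_zero k (ringChar k) with hp | hp
      · exact hchar (ringChar k) hp ((ringChar.spec k (ringChar k)).mpr dvd_rfl)
          (hdvd'.trans hdvd)
      · exact hn_pos.ne' (zero_dvd_iff.mp (hp ▸ hdvd'))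
    set c : G → k := fun σ => ((χ σ⁻¹ : kˣ) : k) with hc_def
    set w : V := (n : k)⁻¹ • ∑ σ : G, c σ • σ • v with hw_def
    have hwS : w ∈ S := by
      intro τ
      have hre : ∑ σ : G, c σ • (τ * σ) • v
          = ((χ τ : kˣ) : k) • ∑ σ : G, c σ • σ • v := by
        rw [Finset.smul_sum]
        refine Fintype.sum_equiv (Equiv.mulLeft τ) _ _ ?_
        intro σ
        simp only [Equiv.coe_mulLeft, hc_def]
        rw [smul_smul]
        have hu : χ τ * χ (τ * σ)⁻¹ = χ σ⁻¹ := by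
          rw [map_inv, map_mul, mul_inv_rev, map_inv, mul_comm]
          exact inv_mul_cancel_right _ _
        rw [← Units.val_mul, hu]
      calc τ • w = (n : k)⁻¹ • ∑ σ : G, c σ • (τ * σ) • v := by
            rw [hw_def, smul_comm τ ((n : k)⁻¹), Finset.smul_sum]
            congr 1
            refine Finset.sum_congr rfl fun σ _ => ?_
            rw [smul_comm τ (c σ), mul_smul]
        _ = ((χ τ : kˣ) : k) • w := by
            rw [hre, hw_def, smul_comm]
    have hterm : ∀ σ : G, c σ • p i₀ (σ • v)
        = if σ • i₀ = i₀ then v else 0 := by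
      intro σ
      have h1 : p i₀ (σ • v) = σ • p (σ⁻¹ • i₀) v := by
        rw [hpG σ (σ⁻¹ • i₀) v, smul_inv_smul]
      by_cases hσ : σ • i₀ = i₀
      · have h2 : σ⁻¹ • i₀ = i₀ := by
          conv_lhs => rw [← hσ]
          rw [inv_smul_smul]
        rw [if_pos hσ, h1, h2, hv1, hv2 σ hσ, smul_smul, hc_def]
        norm_num [← Units.val_mul, ← map_mul]
      · have h2 : σ⁻¹ • i₀ ≠ i₀ := fun h => hσ (by
          have h' := congrArg (fun j => σ • j) h
          simpa using h'.symm)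
        have h3 : p (σ⁻¹ • i₀) v = 0 := by
          rw [← hv1, hportho _ _ h2]
        rw [if_neg hσ, h1, h3, smul_zero, smul_zero]
    have hsum : ∑ σ : G, c σ • p i₀ (σ • v) = (n : k) • v := by
      rw [Finset.sum_congr rfl fun σ _ => hterm σ, Finset.sum_ite,
        Finset.sum_const, Finset.sum_const_zero, add_zero,
        Nat.cast_smul_eq_nsmul]
    have hpw : p i₀ w = v := by
      rw [hw_def, map_smul, map_sum]
      simp_rw [map_smul]
      rw [hsum, smul_smul, inv_mul_cancel₀ hnk, one_smul]
    exact ⟨w, hwS, hpw⟩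
  refine ⟨hinjS.mono (fun w hw => hw.2), hmaps, hinjS, hsurj⟩
end
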